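/- Exton's general transformation: for parameters p, p' (not nonpositive integers) and formal power series variables x, s, y, t, Σ_{m,n≥0} ((d)_{m+n} x^m s^n / ((g)_{m+n} m! n!)) · ₁F₁(-m; p; -y) · ₁F₁(-n; p'; -t) = Σ_{m,n≥0} ((d)_{m+n} (xy)^m (st)^n / ((g)_{m+n} (p)_m (p')_n m! n!)) · Σ_{u,v≥0} ((d+m+n)_{u+v} / (g+m+n)_{u+v}) · x^u s^v / (u! v!), where (d) and (g) are single parameters d and g (the case D = G = 1), assuming all series converge absolutely. -/

import Mathlib

/-- Pochhammer symbol `(a)_n`. -/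
noncomputable def poch (a : ℝ) (n : ℕ) : ℝ := Polynomial.eval a (ascPochhammer ℝ n)

/-- Terminating confluent hypergeometric sum `₁F₁(-n; b; x)`. -/
noncomputable def F11 (n : ℕ) (b x : ℝ) : ℝ :=
  ∑ k ∈ Finset.range (n + 1), poch (-(n : ℝ)) k * x ^ k / (poch b k * k.factorial)

/-- Term of the left-hand double series in Exton's transformation. -/
noncomputable def extonLHS (d g p p' x s y t : ℝ) (mn : ℕ × ℕ) : ℝ :=
  poch d (mn.1 + mn.2) * x ^ mn.1 * s ^ mn.2 /
      (poch g (mn.1 + mn.2) * mn.1.factorial * mn.2.factorial) *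
    F11 mn.1 p (-y) * F11 mn.2 p' (-t)

/-- Term of the right-hand double series in Exton's transformation, with the inner
double series `Σ_{u,v} (d+m+n)_{u+v}/(g+m+n)_{u+v} x^u s^v/(u! v!)`. -/
noncomputable def extonRHS (d g p p' x s y t : ℝ) (mn : ℕ × ℕ) : ℝ :=
  poch d (mn.1 + mn.2) * (x * y) ^ mn.1 * (s * t) ^ mn.2 /
      (poch g (mn.1 + mn.2) * poch p mn.1 * poch p' mn.2 *
        mn.1.factorial * mn.2.factorial) *
    ∑' uv : ℕ × ℕ,
      poch (d + mn.1 + mn.2) (uv.1 + uv.2) / poch (g + mn.1 + mn.2) (uv.1 + uv.2) *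
        x ^ uv.1 * s ^ uv.2 / (uv.1.factorial * uv.2.factorial)

lemma poch_zero (a : ℝ) : poch a 0 = 1 := by simp [poch]

lemma poch_succ (a : ℝ) (n : ℕ) : poch a (n + 1) = poch a n * (a + n) := by
  simp [poch, ascPochhammer_succ_right]

lemma poch_add (a : ℝ) (m k : ℕ) : poch a (m + k) = poch a m * poch (a + m) k := by
  induction k with
  | zero => simp [poch_zero]
  | succ k ih => rw [← add_assoc, poch_succ, poch_succ, ih]; push_cast; ring

lemma poch_neg_nat {j m : ℕ} (h : j ≤ m) :
    poch (-(m : ℝ)) j = (-1) ^ j * (m.factorial / (m - j).factorial : ℝ) := by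
  induction j with
  | zero =>
    simp only [poch_zero, pow_zero, Nat.sub_zero, one_mul]
    rw [div_self (Nat.cast_ne_zero.2 (Nat.factorial_ne_zero m))]
  | succ j ih =>
    have hj : j ≤ m := Nat.le_of_succ_le h
    rw [poch_succ, ih hj]
    have h1 : m - j = (m - (j+1)) + 1 := by omega
    rw [h1, Nat.factorial_succ]
    have h3 : ((m - (j+1) : ℕ) : ℝ) + 1 = (m : ℝ) - j := by
      push_cast [Nat.cast_sub h]; ring
    have hne : ((m - (j+1)).factorial : ℝ) ≠ 0 := Nat.cast_ne_zero.2 (Nat.factorial_ne_zero _)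
    have hne2 : ((m : ℝ) - j) ≠ 0 := by
      have : (j : ℝ) < m := by exact_mod_cast h
      linarith
    push_cast
    rw [h3]
    field_simp
    ring

/-- ratio bound: exists `K ≥ 2` with `|d+N| ≤ K * |g+N|` for all `N`. -/
lemma exists_ratio_bound (d g : ℝ) (hg : ∀ k : ℕ, poch g k ≠ 0) :
    ∃ K : ℝ, 2 ≤ K ∧ ∀ N : ℕ, |d + N| ≤ K * |g + N| := by
  have hgN : ∀ N : ℕ, g + (N : ℝ) ≠ 0 := by
    intro N hzero
    have := hg (N + 1)
    rw [poch_succ] at this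
    exact this (by rw [hzero, mul_zero])
  set M := ⌈|d| + 2 * |g|⌉₊ with hM
  refine ⟨2 + ∑ N ∈ Finset.range M, |d + N| / |g + N|, ?_, ?_⟩
  · have : (0:ℝ) ≤ ∑ N ∈ Finset.range M, |d + N| / |g + N| :=
      Finset.sum_nonneg fun i _ => div_nonneg (abs_nonneg _) (abs_nonneg _)
    linarith
  · intro N
    have hgpos : 0 < |g + (N:ℝ)| := abs_pos.2 (hgN N)
    by_cases hN : N < M
    · have hmem : N ∈ Finset.range M := Finset.mem_range.2 hN
      have h1 : |d + (N:ℝ)| / |g + N| ≤ ∑ i ∈ Finset.range M, |d + (i:ℝ)| / |g + i| :=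
        Finset.single_le_sum (f := fun i : ℕ => |d + (i:ℝ)| / |g + i|)
          (fun i _ => div_nonneg (abs_nonneg _) (abs_nonneg _)) hmem
      have h2 : |d + (N:ℝ)| / |g + N| * |g + N| = |d + N| := by
        field_simp
      nlinarith [abs_nonneg (g + (N:ℝ))]
    · push_neg at hN
      have hNge : (|d| + 2 * |g| : ℝ) ≤ N := le_trans (Nat.le_ceil _) (by exact_mod_cast hN)
      have h1 : |d + (N:ℝ)| ≤ |d| + N := by
        calc |d + (N:ℝ)| ≤ |d| + |(N:ℝ)| := abs_add_le _ _
        _ = |d| + N := by rw [abs_of_nonneg (show (0:ℝ) ≤ (N:ℝ) from Nat.cast_nonneg N)]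
      have h2 : (N:ℝ) - |g| ≤ |g + N| := by
        have h3 : |(N:ℝ)| - |(-g)| ≤ |(N:ℝ) - (-g)| := abs_sub_abs_le_abs_sub _ _
        rw [sub_neg_eq_add, abs_neg, abs_of_nonneg (show (0:ℝ) ≤ (N:ℝ) from Nat.cast_nonneg N),
          add_comm] at h3
        exact h3
      have hsum : (0:ℝ) ≤ ∑ i ∈ Finset.range M, |d + (i:ℝ)| / |g + i| :=
        Finset.sum_nonneg fun i _ => div_nonneg (abs_nonneg _) (abs_nonneg _)
      nlinarith

/-- geometric bound on the Pochhammer ratio. -/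
lemma poch_ratio_bound {d g K : ℝ} (hK : ∀ N : ℕ, |d + N| ≤ K * |g + N|) (hK2 : 2 ≤ K) :
    ∀ N : ℕ, |poch d N| ≤ K ^ N * |poch g N| := by
  intro N
  induction N with
  | zero => simp [poch_zero]
  | succ n ih =>
    rw [poch_succ, poch_succ, abs_mul, abs_mul, pow_succ]
    calc |poch d n| * |d + n| ≤ (K ^ n * |poch g n|) * (K * |g + n|) := by
          apply mul_le_mul ih (hK n) (abs_nonneg _)
          positivity
      _ = K ^ n * K * (|poch g n| * |g + n|) := by ring

/-- uniform positive lower bound for `|poch p j|`. -/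
lemma exists_poch_lower (p : ℝ) (hp : ∀ k : ℕ, poch p k ≠ 0) :
    ∃ c : ℝ, 0 < c ∧ ∀ j : ℕ, c ≤ |poch p j| := by
  set M := ⌈|p|⌉₊ + 1 with hM
  have key : ∀ j, M ≤ j → |poch p M| ≤ |poch p j| := by
    intro j hj
    induction j with
    | zero => simp_all
    | succ n ih =>
      rcases Nat.lt_or_ge M (n+1) with h | h
      · have hn : M ≤ n := by omega
        have h1 : (1:ℝ) ≤ |p + n| := by
          have hn' : (M:ℝ) ≤ n := by exact_mod_cast hn
          have h4 : |(n:ℝ)| - |(-p)| ≤ |(n:ℝ) - (-p)| := abs_sub_abs_le_abs_sub _ _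
          rw [sub_neg_eq_add, abs_neg, abs_of_nonneg (show (0:ℝ) ≤ (n:ℝ) from Nat.cast_nonneg n),
            add_comm] at h4
          have hn2 : (M:ℝ) ≤ n := by exact_mod_cast hn
          -- need 1 ≤ n - |p|; |p| ≤ M ≤ n... but need strict: |p| ≤ M and M ≤ n, want n - |p| ≥ 1
          -- since M < n+1 means M ≤ n, and we need M ≥ |p| so n ≥ M ≥ |p| gives n - |p| ≥ 0 only.
          have h5 : (|p| : ℝ) + 1 ≤ M := by
            have := Nat.le_ceil |p|
            push_cast [hM]
            linarith
          linarith
        calc |poch p M| ≤ |poch p n| := ih hn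
          _ = |poch p n| * 1 := (mul_one _).symm
          _ ≤ |poch p n| * |p + n| := by
              apply mul_le_mul_of_nonneg_left h1 (abs_nonneg _)
          _ = |poch p (n+1)| := by rw [poch_succ, abs_mul]
      · have : M = n + 1 := le_antisymm hj h
        rw [this]
  have hne : (Finset.range (M + 1)).Nonempty := ⟨0, Finset.mem_range.2 (Nat.succ_pos M)⟩
  refine ⟨(Finset.range (M + 1)).inf' hne (fun j => |poch p j|), ?_, ?_⟩
  · rw [Finset.lt_inf'_iff]
    exact fun i _ => abs_pos.2 (hp i)
  · intro j
    rcases Nat.lt_or_ge j (M + 1) with h | h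
    · exact Finset.inf'_le _ (Finset.mem_range.2 h)
    · calc (Finset.range (M + 1)).inf' hne (fun j => |poch p j|) ≤ |poch p M| :=
            Finset.inf'_le _ (Finset.mem_range.2 (Nat.lt_succ_self M))
        _ ≤ |poch p j| := key j (by omega)

/-- The generic 4-index term of Exton's identity. -/
noncomputable def cterm (d g p p' x s y t : ℝ) (q : (ℕ × ℕ) × (ℕ × ℕ)) : ℝ :=
  poch d (q.1.1 + q.1.2 + q.2.1 + q.2.2) * x ^ (q.1.1 + q.2.1) * s ^ (q.1.2 + q.2.2) *
      y ^ q.1.1 * t ^ q.1.2 /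
    (poch g (q.1.1 + q.1.2 + q.2.1 + q.2.2) * poch p q.1.1 * poch p' q.1.2 *
      q.1.1.factorial * q.1.2.factorial * q.2.1.factorial * q.2.2.factorial)

set_option maxHeartbeats 2000000 in
lemma summable_cterm (d g p p' x s y t : ℝ)
    (hp : ∀ k : ℕ, poch p k ≠ 0) (hp' : ∀ k : ℕ, poch p' k ≠ 0)
    (hg : ∀ k : ℕ, poch g k ≠ 0) :
    Summable (cterm d g p p' x s y t) := by
  obtain ⟨K, hK2, hK⟩ := exists_ratio_bound d g hg
  have hKb := poch_ratio_bound hK hK2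
  obtain ⟨cp, hcp, hcpl⟩ := exists_poch_lower p hp
  obtain ⟨cp', hcp', hcpl'⟩ := exists_poch_lower p' hp'
  have hK0 : (0:ℝ) < K := by linarith
  -- the dominating product family
  set A : ℕ → ℝ := fun j => (K * (|x| * |y|)) ^ j / (cp * j.factorial) with hA
  set B : ℕ → ℝ := fun k => (K * (|s| * |t|)) ^ k / (cp' * k.factorial) with hB
  set E : ℕ → ℝ := fun u => (K * |x|) ^ u / u.factorial with hE
  set F : ℕ → ℝ := fun v => (K * |s|) ^ v / v.factorial with hF
  have hAs : Summable A := by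
    have := (Real.summable_pow_div_factorial (K * (|x| * |y|))).mul_left (1 / cp)
    refine this.congr fun j => ?_
    simp only [hA]
    ring
  have hBs : Summable B := by
    have := (Real.summable_pow_div_factorial (K * (|s| * |t|))).mul_left (1 / cp')
    refine this.congr fun k => ?_
    simp only [hB]
    ring
  have hEs : Summable E := Real.summable_pow_div_factorial _
  have hFs : Summable F := Real.summable_pow_div_factorial _
  have hA0 : 0 ≤ A := fun j => by positivity
  have hB0 : 0 ≤ B := fun k => by positivity
  have hE0 : 0 ≤ E := fun u => by positivity
  have hF0 : 0 ≤ F := fun v => by positivity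
  have hAB : Summable fun jk : ℕ × ℕ => A jk.1 * B jk.2 :=
    hAs.mul_of_nonneg hBs hA0 hB0
  have hEF : Summable fun uv : ℕ × ℕ => E uv.1 * F uv.2 :=
    hEs.mul_of_nonneg hFs hE0 hF0
  have hbig : Summable fun q : (ℕ × ℕ) × (ℕ × ℕ) => (A q.1.1 * B q.1.2) * (E q.2.1 * F q.2.2) :=
    hAB.mul_of_nonneg hEF (fun jk => by positivity) (fun uv => by positivity)
  refine Summable.of_abs (Summable.of_nonneg_of_le (fun q => abs_nonneg _) (fun q => ?_) hbig)
  obtain ⟨⟨j, k⟩, u, v⟩ := q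
  have hN : j + k + u + v = j + k + u + v := rfl
  have hgpos : 0 < |poch g (j + k + u + v)| := abs_pos.2 (hg _)
  have hppos : 0 < |poch p j| := abs_pos.2 (hp _)
  have hppos' : 0 < |poch p' k| := abs_pos.2 (hp' _)
  have hjf : (0:ℝ) < (j.factorial : ℝ) := by exact_mod_cast j.factorial_pos
  have hkf : (0:ℝ) < (k.factorial : ℝ) := by exact_mod_cast k.factorial_pos
  have huf : (0:ℝ) < (u.factorial : ℝ) := by exact_mod_cast u.factorial_pos
  have hvf : (0:ℝ) < (v.factorial : ℝ) := by exact_mod_cast v.factorial_pos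
  have habs : |cterm d g p p' x s y t ((j,k),(u,v))| =
      (|poch d (j+k+u+v)| / |poch g (j+k+u+v)|) *
        ((|x| ^ j * |y| ^ j) / (|poch p j| * j.factorial)) *
        ((|s| ^ k * |t| ^ k) / (|poch p' k| * k.factorial)) *
        (|x| ^ u / u.factorial) * (|s| ^ v / v.factorial) := by
    simp only [cterm, abs_div, abs_mul, abs_pow, Nat.abs_cast, pow_add]
    ring
  rw [habs]
  have hratio : |poch d (j+k+u+v)| / |poch g (j+k+u+v)| ≤ K ^ (j+k+u+v) :=
    (div_le_iff₀ hgpos).2 (hKb _)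
  calc (|poch d (j+k+u+v)| / |poch g (j+k+u+v)|) *
        ((|x| ^ j * |y| ^ j) / (|poch p j| * j.factorial)) *
        ((|s| ^ k * |t| ^ k) / (|poch p' k| * k.factorial)) *
        (|x| ^ u / u.factorial) * (|s| ^ v / v.factorial)
      ≤ K ^ (j+k+u+v) *
        ((|x| ^ j * |y| ^ j) / (cp * j.factorial)) *
        ((|s| ^ k * |t| ^ k) / (cp' * k.factorial)) *
        (|x| ^ u / u.factorial) * (|s| ^ v / v.factorial) := by
        gcongr
        · exact hcpl j
        · exact hcpl' k
    _ = (A j * B k) * (E u * F v) := by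
        simp only [hA, hB, hE, hF, pow_add, mul_pow]
        ring

set_option maxHeartbeats 2000000 in
theorem exton_general_transformation (d g p p' x s y t : ℝ)
    (hp : ∀ k : ℕ, poch p k ≠ 0) (hp' : ∀ k : ℕ, poch p' k ≠ 0)
    (hg : ∀ k : ℕ, poch g k ≠ 0)
    (hg' : ∀ m n k : ℕ, poch (g + m + n) k ≠ 0)
    (hinner : ∀ m n : ℕ, Summable fun uv : ℕ × ℕ =>
      poch (d + m + n) (uv.1 + uv.2) / poch (g + m + n) (uv.1 + uv.2) *
        x ^ uv.1 * s ^ uv.2 / (uv.1.factorial * uv.2.factorial))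
    (hL : Summable (extonLHS d g p p' x s y t))
    (hR : Summable (extonRHS d g p p' x s y t)) :
    ∑' mn : ℕ × ℕ, extonLHS d g p p' x s y t mn =
      ∑' mn : ℕ × ℕ, extonRHS d g p p' x s y t mn := by
  clear hinner hL hR
  have hfact : ∀ n : ℕ, ((n.factorial : ℝ)) ≠ 0 :=
    fun n => Nat.cast_ne_zero.2 n.factorial_ne_zero
  have hcs : Summable (cterm d g p p' x s y t) := summable_cterm d g p p' x s y t hp hp' hg
  set S : ℝ := ∑' q, cterm d g p p' x s y t q with hS
  have hc : HasSum (cterm d g p p' x s y t) S := hcs.hasSum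
  -- RHS fibers
  have hRfiber : ∀ mn : ℕ × ℕ,
      (∑' uv : ℕ × ℕ, cterm d g p p' x s y t (mn, uv)) = extonRHS d g p p' x s y t mn := by
    rintro ⟨m, n⟩
    have key : ∀ uv : ℕ × ℕ, cterm d g p p' x s y t ((m, n), uv) =
        (poch d (m + n) * (x * y) ^ m * (s * t) ^ n /
          (poch g (m + n) * poch p m * poch p' n * m.factorial * n.factorial)) *
        (poch (d + m + n) (uv.1 + uv.2) / poch (g + m + n) (uv.1 + uv.2) *
          x ^ uv.1 * s ^ uv.2 / (uv.1.factorial * uv.2.factorial)) := by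
      rintro ⟨u, v⟩
      have hd1 : poch d (m + n + u + v) = poch d (m + n) * poch (d + m + n) (u + v) := by
        have h := poch_add d (m + n) (u + v)
        rw [show m + n + (u + v) = m + n + u + v from by omega] at h
        rw [h, show ((m + n : ℕ) : ℝ) = (m : ℝ) + n from by push_cast; ring, ← add_assoc]
      have hg1 : poch g (m + n + u + v) = poch g (m + n) * poch (g + m + n) (u + v) := by
        have h := poch_add g (m + n) (u + v)
        rw [show m + n + (u + v) = m + n + u + v from by omega] at h
        rw [h, show ((m + n : ℕ) : ℝ) = (m : ℝ) + n from by push_cast; ring, ← add_assoc]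
      simp only [cterm]
      rw [hd1, hg1]
      have h1 := hg (m + n)
      have h2 := hg' m n (u + v)
      have h3 := hp m
      have h4 := hp' n
      field_simp
      ring
    rw [tsum_congr key, tsum_mul_left]
    simp only [extonRHS]
  have hRsum : HasSum (extonRHS d g p p' x s y t) S := by
    apply hc.prod_fiberwise
    intro mn
    have h := (hcs.prod_factor mn).hasSum
    rwa [hRfiber mn] at h
  -- LHS: regrouping via the injection ι
  set ι : (ℕ × ℕ) × (ℕ × ℕ) → (ℕ × ℕ) × (ℕ × ℕ) :=
    fun q => ((q.1.1 + q.2.1, q.1.2 + q.2.2), q.1) with hι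
  set ctil : (ℕ × ℕ) × (ℕ × ℕ) → ℝ := fun r =>
    if r.2.1 ≤ r.1.1 ∧ r.2.2 ≤ r.1.2 then
      cterm d g p p' x s y t (r.2, (r.1.1 - r.2.1, r.1.2 - r.2.2))
    else 0 with hctil
  have hinj : Function.Injective ι := by
    rintro ⟨⟨j, k⟩, u, v⟩ ⟨⟨j', k'⟩, u', v'⟩ h
    simp only [hι, Prod.mk.injEq] at h
    simp only [Prod.mk.injEq]
    omega
  have hvanish : ∀ r ∉ Set.range ι, ctil r = 0 := by
    rintro ⟨⟨m, n⟩, j, k⟩ hr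
    simp only [hctil]
    rw [if_neg]
    rintro ⟨h1, h2⟩
    have e1 : j + (m - j) = m := by omega
    have e2 : k + (n - k) = n := by omega
    exact hr ⟨((j, k), (m - j, n - k)), by simp only [hι, e1, e2]⟩
  have hcomp : ctil ∘ ι = cterm d g p p' x s y t := by
    funext q
    obtain ⟨⟨j, k⟩, u, v⟩ := q
    simp only [Function.comp_apply, hctil, hι]
    rw [if_pos ⟨Nat.le_add_right j u, Nat.le_add_right k v⟩]
    have e1 : j + u - j = u := by omega
    have e2 : k + v - k = v := by omega
    rw [e1, e2]
  have hc2 : HasSum ctil S := (hinj.hasSum_iff hvanish).mp (by rw [hcomp]; exact hc)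
  -- LHS fibers
  have hLfiber : ∀ mn : ℕ × ℕ,
      (∑' jk : ℕ × ℕ, ctil (mn, jk)) = extonLHS d g p p' x s y t mn := by
    rintro ⟨m, n⟩
    rw [tsum_eq_sum (s := Finset.range (m + 1) ×ˢ Finset.range (n + 1)) ?side]
    case side =>
      rintro ⟨j, k⟩ hjk
      simp only [Finset.mem_product, Finset.mem_range, Nat.lt_succ_iff] at hjk
      simp only [hctil]
      rw [if_neg]
      rintro ⟨h1, h2⟩
      exact hjk ⟨h1, h2⟩
    rw [Finset.sum_product, Finset.sum_comm]
    simp only [extonLHS, F11]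
    simp only [Finset.sum_mul, Finset.mul_sum]
    refine Finset.sum_congr rfl fun k hk => Finset.sum_congr rfl fun j hj => ?_
    rw [Finset.mem_range, Nat.lt_succ_iff] at hj hk
    simp only [hctil]
    rw [if_pos ⟨hj, hk⟩]
    simp only [cterm]
    rw [show j + k + (m - j) + (n - k) = m + n from by omega,
      show j + (m - j) = m from by omega, show k + (n - k) = n from by omega,
      poch_neg_nat hj, poch_neg_nat hk, neg_pow y, neg_pow t]
    have hone : ∀ i : ℕ, ((-1 : ℝ)) ^ (i * 2) = 1 := by
      intro i
      rw [mul_comm, pow_mul]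
      norm_num
    have h1 := hg (m + n)
    have h2 := hp j
    have h3 := hp' k
    have e3 : j ≤ m := hj
    have e4 : k ≤ n := hk
    field_simp
    ring_nf
    rw [hone j, hone k, mul_one, mul_one]
  have hLsum : HasSum (extonLHS d g p p' x s y t) S := by
    apply hc2.prod_fiberwise
    intro mn
    have h := (hc2.summable.prod_factor mn).hasSum
    rwa [hLfiber mn] at h
  rw [hLsum.tsum_eq, hRsum.tsum_eq]
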